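/- arXiv:1005.2670 — 3 statements merged into one kernel-verified Lean document; each statement's English description precedes it below -/
import Mathlib

section
/- For every q ≥ −1, the simplicial set [p] ↦ Hom_{Δ_*}([p]_*, [q]_*) (with simplicial structure given by precomposition along the embedding Δ → Δ_*) is contractible: it is simplicially homotopy equivalent to the standard 0-simplex Δ[0] (equivalently, to the constant simplicial set on the one-element set Hom_{Δ_*}([−1]_*, [q]_*)). -/
open CategoryTheory Simplicial Opposite

/-- The category `Δ_*`: `mk n` represents the pointed ordered set `[n-1]_*`, with underlying
set `Fin (n+1)` and basepoint the largest element `Fin.last n`; in particular `mk 0` is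
`[-1]_* = {*}`.  Morphisms are monotone maps sending the basepoint to the basepoint. -/
structure DeltaStar where
  n : ℕ

namespace DeltaStar

instance : Category DeltaStar where
  Hom X Y := { f : Fin (X.n + 1) →o Fin (Y.n + 1) // f (Fin.last X.n) = Fin.last Y.n }
  id X := ⟨OrderHom.id, rfl⟩
  comp f g := ⟨g.1.comp f.1, by simp [OrderHom.comp_coe, f.2, g.2]⟩
  id_comp f := Subtype.ext (OrderHom.comp_id f.1)
  comp_id f := Subtype.ext (OrderHom.id_comp f.1)
  assoc f g h := rfl

/-- The extension of a monotone map `Fin (a+1) → Fin (b+1)` to a pointed monotone map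
on `Fin (a+2) → Fin (b+2)` sending the new largest element to the new largest element. -/
def extendFun {a b : ℕ} (f : Fin (a + 1) →o Fin (b + 1)) : Fin (a + 2) →o Fin (b + 2) where
  toFun := Fin.lastCases (Fin.last (b + 1)) (fun i => (f i).castSucc)
  monotone' := by
    intro x y hxy
    induction y using Fin.lastCases with
    | last => simp [Fin.le_last]
    | cast j =>
      induction x using Fin.lastCases with
      | last => exact absurd hxy (not_le.mpr (Fin.castSucc_lt_last j))
      | cast i =>
        simp only [Fin.lastCases_castSucc]
        exact Fin.castSucc_le_castSucc_iff.mpr (f.monotone (Fin.castSucc_le_castSucc_iff.mp hxy))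

@[simp] lemma extendFun_last {a b : ℕ} (f : Fin (a + 1) →o Fin (b + 1)) :
    extendFun f (Fin.last (a + 1)) = Fin.last (b + 1) :=
  Fin.lastCases_last (motive := fun _ => Fin (b + 2)) ..

@[simp] lemma extendFun_castSucc {a b : ℕ} (f : Fin (a + 1) →o Fin (b + 1)) (i : Fin (a + 1)) :
    extendFun f i.castSucc = (f i).castSucc :=
  Fin.lastCases_castSucc (motive := fun _ => Fin (b + 2)) ..

/-- The (non-full) embedding `Δ → Δ_*`, `[p] ↦ [p]_*`, extending monotone maps by `* ↦ *`. -/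
def iota : SimplexCategory ⥤ DeltaStar where
  obj p := ⟨p.len + 1⟩
  map f := ⟨extendFun f.toOrderHom, by simp [extendFun_last]⟩
  map_id p := by
    apply Subtype.ext; apply OrderHom.ext; funext x
    show extendFun (SimplexCategory.Hom.toOrderHom (𝟙 p)) x = x
    induction x using Fin.lastCases with
    | last => simp [extendFun_last]
    | cast i => simp [extendFun_castSucc]
  map_comp f g := by
    apply Subtype.ext; apply OrderHom.ext; funext x
    show extendFun (SimplexCategory.Hom.toOrderHom (f ≫ g)) x =
      extendFun (SimplexCategory.Hom.toOrderHom g) (extendFun (SimplexCategory.Hom.toOrderHom f) x)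
    induction x using Fin.lastCases with
    | last => simp [extendFun_last]
    | cast i => simp [extendFun_castSucc]

/-- The unique morphism `[-1]_* → X` in `Δ_*`. -/
def fromPoint (X : DeltaStar) : (⟨0⟩ : DeltaStar) ⟶ X :=
  ⟨⟨fun _ => Fin.last X.n, monotone_const⟩, rfl⟩

/-- The unique morphism `X → [-1]_*` in `Δ_*` (everything to the basepoint). -/
def toPoint (X : DeltaStar) : X ⟶ (⟨0⟩ : DeltaStar) :=
  ⟨⟨fun _ => Fin.last 0, monotone_const⟩, rfl⟩

lemma fromPoint_unique {X : DeltaStar} (g : (⟨0⟩ : DeltaStar) ⟶ X) : g = fromPoint X := by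
  apply Subtype.ext; apply OrderHom.ext; funext x
  have hx : x = Fin.last 0 := Fin.ext (by simpa using Nat.lt_one_iff.mp x.isLt)
  rw [hx, g.2]; rfl

lemma toPoint_unique {X : DeltaStar} (g : X ⟶ (⟨0⟩ : DeltaStar)) : g = toPoint X := by
  apply Subtype.ext; apply OrderHom.ext; funext x
  exact Fin.ext (by simpa using Nat.lt_one_iff.mp (g.1 x).isLt)

end DeltaStar

namespace DeltaStar

/-- For a monotone map `α : [a] → [1]`, the underlying map of
`r_α : [a]_* → [a]_*`: the identity on `α⁻¹(0)`, sending `α⁻¹(1)` and `*` to `*`. -/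
def rAlphaFun {a : ℕ} (α : Fin (a + 1) →o Fin 2) : Fin (a + 2) →o Fin (a + 2) where
  toFun := Fin.lastCases (Fin.last (a + 1))
    (fun k => if α k = 1 then Fin.last (a + 1) else k.castSucc)
  monotone' := by
    intro x y hxy
    induction y using Fin.lastCases with
    | last => simp [Fin.le_last]
    | cast j =>
      induction x using Fin.lastCases with
      | last => exact absurd hxy (not_le.mpr (Fin.castSucc_lt_last j))
      | cast i =>
        have hij : i ≤ j := Fin.castSucc_le_castSucc_iff.mp hxy
        simp only [Fin.lastCases_castSucc]
        by_cases h1 : α i = 1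
        · have h2 : α j = 1 := by
            have := α.monotone hij
            rw [h1] at this
            exact le_antisymm (Fin.le_last _) this
          simp [h1, h2]
        · by_cases h2 : α j = 1
          · simp [h1, h2, Fin.le_last]
          · simpa [h1, h2] using hxy

@[simp] lemma rAlphaFun_last {a : ℕ} (α : Fin (a + 1) →o Fin 2) :
    rAlphaFun α (Fin.last (a + 1)) = Fin.last (a + 1) :=
  Fin.lastCases_last (motive := fun _ => Fin (a + 2)) ..

@[simp] lemma rAlphaFun_castSucc {a : ℕ} (α : Fin (a + 1) →o Fin 2) (k : Fin (a + 1)) :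
    rAlphaFun α k.castSucc = if α k = 1 then Fin.last (a + 1) else k.castSucc :=
  Fin.lastCases_castSucc (motive := fun _ => Fin (a + 2)) ..

/-- The morphism `r_α : [p]_* → [p]_*` of `Δ_*` associated with `α ∈ Δ[1]_p`:
the identity on `α⁻¹(0)`, sending `α⁻¹(1)` to `*`. -/
def rAlpha {p : SimplexCategory} (α : p ⟶ SimplexCategory.mk 1) :
    iota.obj p ⟶ iota.obj p :=
  ⟨rAlphaFun α.toOrderHom, by
    show rAlphaFun α.toOrderHom (Fin.last (p.len + 1)) = Fin.last (p.len + 1)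
    simp [rAlphaFun_last]⟩

lemma rAlphaFun_naturality {a b : ℕ} (ψ : Fin (a + 1) →o Fin (b + 1))
    (α : Fin (b + 1) →o Fin 2) (x : Fin (a + 2)) :
    extendFun ψ (rAlphaFun (α.comp ψ) x) = rAlphaFun α (extendFun ψ x) := by
  induction x using Fin.lastCases with
  | last => simp [extendFun_last, rAlphaFun_last]
  | cast i =>
    by_cases h : α (ψ i) = 1 <;>
      simp [extendFun_last, extendFun_castSucc, rAlphaFun_last, rAlphaFun_castSucc, OrderHom.comp_coe, h]

lemma rAlpha_naturality {p q : SimplexCategory} (ψ : p ⟶ q)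
    (α : q ⟶ SimplexCategory.mk 1) :
    rAlpha (ψ ≫ α) ≫ iota.map ψ = iota.map ψ ≫ rAlpha α := by
  apply Subtype.ext; apply OrderHom.ext; funext x
  exact rAlphaFun_naturality ψ.toOrderHom α.toOrderHom x

end DeltaStar

/-- The (pointwise) product of two simplicial sets. -/
def prodSSet (X Y : SSet) : SSet where
  obj m := X.obj m × Y.obj m
  map φ := TypeCat.ofHom (fun x => (X.map φ x.1, Y.map φ x.2))
  map_id m := by ext x <;> simp
  map_comp φ ψ := by ext x <;> simp

/-- The end inclusion `K → K × Δ[1]` at the vertex `j ∈ {0, 1}` of `Δ[1]`. -/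
def endMap (K : SSet) (j : Fin 2) :
    K ⟶ prodSSet K (SSet.stdSimplex.obj (SimplexCategory.mk 1)) where
  app m := TypeCat.ofHom (fun x => (x, ULift.up (SimplexCategory.const m.unop (SimplexCategory.mk 1) j)))
  naturality m m' φ := by
    ext x
    dsimp [prodSSet]
    congr 1

open DeltaStar

variable (Q : DeltaStar)

/-- The simplicial set `[p] ↦ Hom_{Δ_*}([p]_*, [q]_*)` (where `Q = [q]_*`), with simplicial
structure given by precomposition along the embedding `Δ → Δ_*`. -/
def homSSet : SSet := iota.op ⋙ yoneda.obj Q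

/-- The constant simplicial set on the (one-element) set `Hom_{Δ_*}([-1]_*, [q]_*)`. -/
def constHom : SSet :=
  (Functor.const SimplexCategoryᵒᵖ).obj ((⟨0⟩ : DeltaStar) ⟶ Q)

/-- `f : homSSet Q → constHom Q`, precomposition with the unique map `[-1]_* → [p]_*`. -/
def toConst : homSSet Q ⟶ constHom Q where
  app m := TypeCat.ofHom (fun g => fromPoint (iota.obj m.unop) ≫ g)
  naturality m m' φ := by
    ext g
    change iota.obj m.unop ⟶ Q at g
    show fromPoint (iota.obj m'.unop) ≫ (iota.map φ.unop ≫ g)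
        = fromPoint (iota.obj m.unop) ≫ g
    rw [← Category.assoc, fromPoint_unique (fromPoint (iota.obj m'.unop) ≫ iota.map φ.unop)]

/-- `g : constHom Q → homSSet Q`, precomposition with the map `[p]_* → [-1]_*`. -/
def fromConst : constHom Q ⟶ homSSet Q where
  app m := TypeCat.ofHom (fun a => toPoint (iota.obj m.unop) ≫ a)
  naturality m m' φ := by
    ext a
    change (⟨0⟩ : DeltaStar) ⟶ Q at a
    show toPoint (iota.obj m'.unop) ≫ a
        = iota.map φ.unop ≫ (toPoint (iota.obj m.unop) ≫ a)
    rw [← Category.assoc, toPoint_unique (iota.map φ.unop ≫ toPoint (iota.obj m.unop))]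

/-- The simplicial homotopy `H : homSSet Q × Δ[1] → homSSet Q`, given by precomposition
with the maps `r_α : [p]_* → [p]_*`. -/
def homHtpy :
    prodSSet (homSSet Q) (SSet.stdSimplex.obj (SimplexCategory.mk 1)) ⟶ homSSet Q where
  app m := TypeCat.ofHom (fun z => rAlpha z.2.down ≫ z.1)
  naturality m m' φ := by
    ext z
    change (iota.obj m.unop ⟶ Q) × ULift (m.unop ⟶ SimplexCategory.mk 1) at z
    show rAlpha (φ.unop ≫ z.2.down) ≫ (iota.map φ.unop ≫ z.1)
        = iota.map φ.unop ≫ (rAlpha z.2.down ≫ z.1)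
    rw [← Category.assoc, rAlpha_naturality φ.unop z.2.down, Category.assoc]

lemma rAlphaFun_apply_last {a : ℕ} (α : Fin (a + 1) →o Fin 2) :
    rAlphaFun α (Fin.last (a + 1)) = Fin.last (a + 1) := by
  exact rAlphaFun_last α

lemma rAlphaFun_apply_castSucc {a : ℕ} (α : Fin (a + 1) →o Fin 2) (i : Fin (a + 1)) :
    rAlphaFun α i.castSucc = if α i = 1 then Fin.last (a + 1) else i.castSucc := by
  exact rAlphaFun_castSucc α i

/-- For every object `[q]_*` of `Δ_*` (`q ≥ −1`), the simplicial set
`[p] ↦ Hom_{Δ_*}([p]_*, [q]_*)` is contractible: it is simplicially homotopy equivalent to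
the constant simplicial set on the one-element set `Hom_{Δ_*}([−1]_*, [q]_*)`
(equivalently, to the standard `0`-simplex `Δ[0]`). -/
theorem homSSet_contractible (Q : DeltaStar) :
    -- `Hom_{Δ_*}([−1]_*, [q]_*)` is a one-element set:
    (Nonempty ((⟨0⟩ : DeltaStar) ⟶ Q) ∧ ∀ a b : (⟨0⟩ : DeltaStar) ⟶ Q, a = b) ∧
      -- homotopy equivalence with the constant simplicial set:
      fromConst Q ≫ toConst Q = 𝟙 (constHom Q) ∧
      endMap (homSSet Q) 0 ≫ homHtpy Q = 𝟙 (homSSet Q) ∧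
      endMap (homSSet Q) 1 ≫ homHtpy Q = toConst Q ≫ fromConst Q := by
  refine ⟨⟨⟨fromPoint Q⟩, fun a b => (fromPoint_unique a).trans (fromPoint_unique b).symm⟩,
    ?_, ?_, ?_⟩
  · apply NatTrans.ext; funext m; apply ConcreteCategory.hom_ext; intro a
    change (⟨0⟩ : DeltaStar) ⟶ Q at a
    show fromPoint (iota.obj m.unop) ≫ (toPoint (iota.obj m.unop) ≫ a) = a
    rw [← Category.assoc,
      fromPoint_unique (fromPoint (iota.obj m.unop) ≫ toPoint (iota.obj m.unop)),
      ← fromPoint_unique (𝟙 _), Category.id_comp]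
  · apply NatTrans.ext; funext m; apply ConcreteCategory.hom_ext; intro g
    change iota.obj m.unop ⟶ Q at g
    show rAlpha (SimplexCategory.const m.unop (SimplexCategory.mk 1) 0) ≫ g = g
    have h : rAlpha (SimplexCategory.const m.unop (SimplexCategory.mk 1) 0)
        = 𝟙 (iota.obj m.unop) := by
      apply Subtype.ext; apply OrderHom.ext; funext x
      induction x using Fin.lastCases with
      | last => exact rAlphaFun_apply_last _
      | cast i =>
        refine (rAlphaFun_apply_castSucc _ i).trans ?_
        exact (if_neg (fun h => absurd (show (0 : Fin 2) = 1 from h) (by decide))).trans rfl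
    rw [h, Category.id_comp]
  · apply NatTrans.ext; funext m; apply ConcreteCategory.hom_ext; intro g
    change iota.obj m.unop ⟶ Q at g
    show rAlpha (SimplexCategory.const m.unop (SimplexCategory.mk 1) 1) ≫ g
      = toPoint (iota.obj m.unop) ≫ (fromPoint (iota.obj m.unop) ≫ g)
    rw [← Category.assoc]
    congr 1
    apply Subtype.ext; apply OrderHom.ext; funext x
    show rAlphaFun _ x = Fin.last _
    induction x using Fin.lastCases with
    | last => exact rAlphaFun_apply_last _
    | cast i =>
      exact (rAlphaFun_apply_castSucc _ i).trans (if_pos rfl)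
end

section
/- Let M^• be a cosimplicial object in cochain complexes of abelian groups and suppose there is n₀ ∈ ℤ such that H^n(M^p) = 0 for every n ≤ n₀ and every p ≥ 0. Then the product total complex Tot(M^•) is cohomologically bounded from below; precisely, H^n(Tot(M^•)) = 0 for all n ≤ n₀. -/
/-!
STATEMENT 5.  Let `M^•` be a cosimplicial object in cochain complexes of abelian groups
(formalized as `CosimplicialObject (CochainComplex AddCommGrpCat ℤ)`), and suppose there is
`n₀ ∈ ℤ` with `H^n(M^p) = 0` for all `n ≤ n₀` and all `p ≥ 0`.  Then the product total
complex `Tot(M^•)`, with `Tot(M^•)^n = ∏_{p ≥ 0} (M^p)^{n−p}` and differential the internal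
differential (with sign `(−1)^p`) plus the alternating sum of the coface maps, satisfies
`H^n(Tot(M^•)) = 0` for all `n ≤ n₀`.

Vanishing of `H^m` of a cochain complex is expressed elementwise: every `m`-cocycle is a
coboundary (kernel of the outgoing differential is contained in, hence equal to, the image
of the incoming one).
-/

open CategoryTheory AlgebraicTopology

/-- The degree-`n` part `∏_{p ≥ 0} (M^p)^{n−p}` of the product total complex of a
cosimplicial cochain complex of abelian groups. -/
def Tot (M : CosimplicialObject (CochainComplex AddCommGrpCat ℤ)) (n : ℤ) : Type :=
  ∀ p : ℕ, ((M.obj (SimplexCategory.mk p)).X (n - (p : ℤ)))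

instance (M : CosimplicialObject (CochainComplex AddCommGrpCat ℤ)) (n : ℤ) :
    AddCommGroup (Tot M n) :=
  by unfold Tot; infer_instance

/-- The total differential `Tot(M^•)^n → Tot(M^•)^{n+1}`: in column `p` it is
`(−1)^p` times the internal differential of `M^p` plus the alternating sum
`Σ_{i=0}^{p} (−1)^i δ_i` of the coface maps applied to the column-`(p−1)` component. -/
def totD (M : CosimplicialObject (CochainComplex AddCommGrpCat ℤ)) (n : ℤ) (x : Tot M n) :
    Tot M (n + 1) := fun p =>
  ((-1 : ℤ) ^ p •
      ((M.obj (SimplexCategory.mk p)).d (n - (p : ℤ)) (n + 1 - (p : ℤ)) (x p))) +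
  (match p with
    | 0 => 0
    | q + 1 =>
      cast
        (congrArg (fun t => ((M.obj (SimplexCategory.mk (q + 1))).X t : Type))
          (show n - (q : ℤ) = n + 1 - ((q : ℕ) + 1 : ℕ) by push_cast; ring))
        (∑ i : Fin (q + 2), (-1 : ℤ) ^ (i : ℕ) • ((M.δ i).f (n - (q : ℤ)) (x q))))

section helpers

variable (M : CosimplicialObject (CochainComplex AddCommGrpCat ℤ))

/-- transport along a degree equality -/
def tr (C : CochainComplex AddCommGrpCat ℤ) {m m' : ℤ} (h : m = m') (z : C.X m) : C.X m' :=
  cast (congrArg (fun t => (C.X t : Type)) h) z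

lemma tr_self (C : CochainComplex AddCommGrpCat ℤ) {m : ℤ} (h : m = m) (z : C.X m) :
    tr C h z = z := rfl

lemma tr_tr (C : CochainComplex AddCommGrpCat ℤ) {a b c : ℤ} (h : a = b) (h' : b = c) (z : C.X a) :
    tr C h' (tr C h z) = tr C (h.trans h') z := by subst h; subst h'; rfl

lemma tr_sub (C : CochainComplex AddCommGrpCat ℤ) {a b : ℤ} (h : a = b) (z w : C.X a) :
    tr C h (z - w) = tr C h z - tr C h w := by subst h; rfl

lemma tr_add (C : CochainComplex AddCommGrpCat ℤ) {a b : ℤ} (h : a = b) (z w : C.X a) :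
    tr C h (z + w) = tr C h z + tr C h w := by subst h; rfl

lemma tr_zsmul (C : CochainComplex AddCommGrpCat ℤ) {a b : ℤ} (h : a = b) (s : ℤ) (z : C.X a) :
    tr C h (s • z) = s • tr C h z := by subst h; rfl

lemma tr_zero (C : CochainComplex AddCommGrpCat ℤ) {a b : ℤ} (h : a = b) :
    tr C h (0 : C.X a) = 0 := by subst h; rfl

lemma d_comm_tr (C : CochainComplex AddCommGrpCat ℤ) {a a' b b' : ℤ} (ha : a = a') (hb : b = b')
    (z : C.X a) : tr C hb (C.d a b z) = C.d a' b' (tr C ha z) := by subst ha; subst hb; rfl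

lemma d_congr_tr (C : CochainComplex AddCommGrpCat ℤ) {a b b' : ℤ} (hb : b = b') (z : C.X a) :
    C.d a b' z = tr C hb (C.d a b z) := by subst hb; rfl

/-- the alternating sum of the cofaces, elementwise -/
def Bc (q : ℕ) (m : ℤ) (z : (M.obj (SimplexCategory.mk q)).X m) :
    (M.obj (SimplexCategory.mk (q + 1))).X m :=
  ∑ i : Fin (q + 2), (-1 : ℤ) ^ (i : ℕ) • ((M.δ i).f m z)

def evalHom {K L : CochainComplex AddCommGrpCat ℤ} (i : ℤ) : (K ⟶ L) →+ (K.X i →+ L.X i) where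
  toFun φ := (φ.f i).hom
  map_zero' := by rw [HomologicalComplex.zero_f_apply]; rfl
  map_add' f g := by rw [HomologicalComplex.add_f_apply]; rfl

lemma Bc_eq (q : ℕ) (m : ℤ) (z : (M.obj (SimplexCategory.mk q)).X m) :
    Bc M q m z = (AlternatingCofaceMapComplex.objD M q).f m z := by
  have h : ConcreteCategory.hom ((AlternatingCofaceMapComplex.objD M q).f m)
      = evalHom m (∑ i : Fin (q + 2), (-1 : ℤ) ^ (i : ℕ) • (M.δ i)) := by rfl
  rw [Bc]
  refine Eq.trans ?_ (DFunLike.congr_fun h z).symm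
  rw [map_sum, AddMonoidHom.finset_sum_apply]
  refine Finset.sum_congr rfl fun i _ => ?_
  show ((-1 : ℤ) ^ (i : ℕ) • (M.δ i)).f m z = _
  rw [HomologicalComplex.zsmul_f_apply]
  rfl

lemma Bc_d (q : ℕ) (m m' : ℤ) (z : (M.obj (SimplexCategory.mk q)).X m) :
    (M.obj (SimplexCategory.mk (q + 1))).d m m' (Bc M q m z)
      = Bc M q m' ((M.obj (SimplexCategory.mk q)).d m m' z) := by
  rw [Bc_eq, Bc_eq]
  exact ConcreteCategory.congr_hom ((AlternatingCofaceMapComplex.objD M q).comm m m') z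

lemma Bc_Bc (q : ℕ) (m : ℤ) (z : (M.obj (SimplexCategory.mk q)).X m) :
    Bc M (q + 1) m (Bc M q m z) = 0 := by
  rw [Bc_eq, Bc_eq]
  have h2 := congrArg (fun φ => HomologicalComplex.Hom.f φ m)
    (AlternatingCofaceMapComplex.d_squared M q)
  simp only [HomologicalComplex.comp_f, HomologicalComplex.zero_f_apply] at h2
  simpa using ConcreteCategory.congr_hom h2 z

lemma Bc_zsmul (q : ℕ) (m : ℤ) (s : ℤ) (z : (M.obj (SimplexCategory.mk q)).X m) :
    Bc M q m (s • z) = s • Bc M q m z := by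
  simp [Bc, Finset.smul_sum, smul_comm s]

lemma Bc_sub (q : ℕ) (m : ℤ) (z w : (M.obj (SimplexCategory.mk q)).X m) :
    Bc M q m (z - w) = Bc M q m z - Bc M q m w := by
  simp [Bc, smul_sub, Finset.sum_sub_distrib]

lemma tr_Bc (q : ℕ) {m m' : ℤ} (h : m = m') (z : (M.obj (SimplexCategory.mk q)).X m) :
    tr (M.obj (SimplexCategory.mk (q + 1))) h (Bc M q m z)
      = Bc M q m' (tr (M.obj (SimplexCategory.mk q)) h z) := by subst h; rfl

lemma totD_zero (n : ℤ) (x : Tot M n) :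
    totD M n x 0 = (M.obj (SimplexCategory.mk 0)).d (n - ((0 : ℕ) : ℤ))
      (n + 1 - ((0 : ℕ) : ℤ)) (x 0) := by
  show (-1 : ℤ) ^ (0 : ℕ) • _ + 0 = _
  simp

lemma totD_succ (n : ℤ) (x : Tot M n) (q : ℕ) :
    totD M n x (q + 1) = (-1 : ℤ) ^ (q + 1) •
        ((M.obj (SimplexCategory.mk (q + 1))).d (n - ((q + 1 : ℕ) : ℤ))
          (n + 1 - ((q + 1 : ℕ) : ℤ)) (x (q + 1))) +
      tr (M.obj (SimplexCategory.mk (q + 1)))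
        (show n - (q : ℤ) = n + 1 - ((q + 1 : ℕ) : ℤ) by push_cast; ring)
        (Bc M q (n - (q : ℤ)) (x q)) := rfl

lemma sign_solve {A : Type*} [AddCommGroup A] (k : ℕ) (u v : A)
    (h : (-1 : ℤ) ^ (k + 1) • u + v = 0) : u = (-1 : ℤ) ^ k • v := by
  have hsq : ((-1 : ℤ) ^ (k + 1)) * ((-1 : ℤ) ^ (k + 1)) = 1 := by
    rw [← pow_add]; exact Even.neg_one_pow ⟨k + 1, rfl⟩
  calc u = ((-1 : ℤ) ^ (k + 1) * (-1 : ℤ) ^ (k + 1)) • u := by rw [hsq, one_smul]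
    _ = (-1 : ℤ) ^ (k + 1) • ((-1 : ℤ) ^ (k + 1) • u) := by rw [mul_smul]
    _ = (-1 : ℤ) ^ (k + 1) • (-v) := by rw [eq_neg_of_add_eq_zero_left h]
    _ = (-1 : ℤ) ^ k • v := by rw [smul_neg, pow_succ, mul_smul]; simp

lemma step_key (q : ℕ) (b c : ℤ)
    (yq : (M.obj (SimplexCategory.mk q)).X c)
    (yq1 : (M.obj (SimplexCategory.mk (q + 1))).X b)
    (xq1 : (M.obj (SimplexCategory.mk (q + 1))).X c)
    (xq2 : (M.obj (SimplexCategory.mk (q + 2))).X b)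
    (hinv : (M.obj (SimplexCategory.mk (q + 1))).d b c yq1
      = (-1 : ℤ) ^ (q + 1) • (xq1 - Bc M q c yq))
    (hd : (M.obj (SimplexCategory.mk (q + 2))).d b c xq2
      = (-1 : ℤ) ^ (q + 1) • Bc M (q + 1) c xq1) :
    (M.obj (SimplexCategory.mk (q + 2))).d b c (xq2 - Bc M (q + 1) b yq1) = 0 := by
  rw [map_sub, hd, Bc_d, hinv, Bc_zsmul, Bc_sub, Bc_Bc, sub_zero, sub_self]

end helpers

/-- If there is `n₀ ∈ ℤ` such that `H^n(M^p) = 0` for every `n ≤ n₀` and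
every `p ≥ 0`, then `H^n(Tot(M^•)) = 0` for all `n ≤ n₀`; in particular `Tot(M^•)` is
cohomologically bounded from below. -/
theorem tot_cohomology_bounded_below
    (M : CosimplicialObject (CochainComplex AddCommGrpCat ℤ)) (n₀ : ℤ)
    (hM : ∀ (p : ℕ) (n : ℤ), n + 1 ≤ n₀ →
      ∀ x : (M.obj (SimplexCategory.mk p)).X (n + 1),
        (M.obj (SimplexCategory.mk p)).d (n + 1) (n + 2) x = 0 →
          ∃ y : (M.obj (SimplexCategory.mk p)).X n,
            (M.obj (SimplexCategory.mk p)).d n (n + 1) y = x) :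
    ∀ n : ℤ, n + 1 ≤ n₀ → ∀ x : Tot M (n + 1), totD M (n + 1) x = 0 →
      ∃ y : Tot M n, totD M n y = x := by
  intro n hn x hx
  have hn' : ∀ p : ℕ, n - (p : ℤ) + 1 ≤ n₀ := fun p => by
    have h0 : (0 : ℤ) ≤ (p : ℤ) := Int.natCast_nonneg p
    omega
  choose F hF using hM
  have hxc : ∀ p, totD M (n + 1) x p = 0 := fun p => congrFun hx p
  -- transported cocycle condition for `x`, in normalized degrees
  have key : ∀ r : ℕ,
      (M.obj (SimplexCategory.mk (r + 1))).d (n - (r : ℤ)) (n + 1 - (r : ℤ))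
        (tr (M.obj (SimplexCategory.mk (r + 1)))
          (show (n + 1 : ℤ) - ((r + 1 : ℕ) : ℤ) = n - (r : ℤ) by push_cast; ring) (x (r + 1)))
        = (-1 : ℤ) ^ r • Bc M r (n + 1 - (r : ℤ)) (x r) := by
    intro r
    have er : (n + 1 : ℤ) - ((r + 1 : ℕ) : ℤ) = n - (r : ℤ) := by push_cast; ring
    have E : (n + 1 + 1 : ℤ) - ((r + 1 : ℕ) : ℤ) = n + 1 - (r : ℤ) := by push_cast; ring
    have h0 := hxc (r + 1)
    rw [totD_succ] at h0
    have h1 := congrArg (tr (M.obj (SimplexCategory.mk (r + 1))) E) h0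
    rw [tr_add, tr_zsmul, d_comm_tr _ er E, tr_tr, tr_self, tr_zero] at h1
    exact sign_solve r _ _ h1
  -- the building block: given a cocycle at column p+1 in normalized degree, lift it
  have build : ∀ (p : ℕ) (w : (M.obj (SimplexCategory.mk (p + 1))).X (n - (p : ℤ)))
      (hw : (M.obj (SimplexCategory.mk (p + 1))).d (n - (p : ℤ)) (n + 1 - (p : ℤ)) w = 0),
      Σ' z : (M.obj (SimplexCategory.mk (p + 1))).X (n - ((p + 1 : ℕ) : ℤ)),
        (M.obj (SimplexCategory.mk (p + 1))).d (n - ((p + 1 : ℕ) : ℤ))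
            (n + 1 - ((p + 1 : ℕ) : ℤ)) z
          = tr (M.obj (SimplexCategory.mk (p + 1)))
              (show n - (p : ℤ) = n + 1 - ((p + 1 : ℕ) : ℤ) by push_cast; ring) w := by
    intro p w hw
    have eb : n - (p : ℤ) = (n - ((p + 1 : ℕ) : ℤ)) + 1 := by push_cast; ring
    have ec : n + 1 - (p : ℤ) = (n - ((p + 1 : ℕ) : ℤ)) + 2 := by push_cast; ring
    have hw' : (M.obj (SimplexCategory.mk (p + 1))).d ((n - ((p + 1 : ℕ) : ℤ)) + 1)
        ((n - ((p + 1 : ℕ) : ℤ)) + 2) (tr _ eb w) = 0 := by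
      rw [← d_comm_tr _ eb ec, hw, tr_zero]
    refine ⟨F (p + 1) (n - ((p + 1 : ℕ) : ℤ)) (hn' (p + 1)) (tr _ eb w) hw', ?_⟩
    have hFz := hF (p + 1) (n - ((p + 1 : ℕ) : ℤ)) (hn' (p + 1)) (tr _ eb w) hw'
    have h1 : (n - ((p + 1 : ℕ) : ℤ)) + 1 = n + 1 - ((p + 1 : ℕ) : ℤ) := by push_cast; ring
    rw [d_congr_tr _ h1, hFz, tr_tr]
  -- column 0
  have e0 : (n + 1 : ℤ) - ((0 : ℕ) : ℤ) = (n - ((0 : ℕ) : ℤ)) + 1 := by push_cast; ring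
  have e0' : (n + 1 + 1 : ℤ) - ((0 : ℕ) : ℤ) = (n - ((0 : ℕ) : ℤ)) + 2 := by push_cast; ring
  have hx0 : (M.obj (SimplexCategory.mk 0)).d (n + 1 - ((0 : ℕ) : ℤ))
      (n + 1 + 1 - ((0 : ℕ) : ℤ)) (x 0) = 0 := by
    have h := hxc 0; rwa [totD_zero] at h
  have pf0 : (M.obj (SimplexCategory.mk 0)).d ((n - ((0 : ℕ) : ℤ)) + 1)
      ((n - ((0 : ℕ) : ℤ)) + 2) (tr _ e0 (x 0)) = 0 := by
    rw [← d_comm_tr _ e0 e0', hx0, tr_zero]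
  obtain ⟨y0, hy0⟩ : ∃ v : (M.obj (SimplexCategory.mk 0)).X (n - ((0 : ℕ) : ℤ)),
      (M.obj (SimplexCategory.mk 0)).d (n - ((0 : ℕ) : ℤ)) ((n - ((0 : ℕ) : ℤ)) + 1) v
        = tr _ e0 (x 0) :=
    ⟨_, hF 0 (n - ((0 : ℕ) : ℤ)) (hn' 0) (tr _ e0 (x 0)) pf0⟩
  have hcol0 : (M.obj (SimplexCategory.mk 0)).d (n - ((0 : ℕ) : ℤ))
      (n + 1 - ((0 : ℕ) : ℤ)) y0 = x 0 := by
    have h1 : (n - ((0 : ℕ) : ℤ)) + 1 = n + 1 - ((0 : ℕ) : ℤ) := e0.symm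
    rw [d_congr_tr _ h1, hy0, tr_tr, tr_self]
  -- the motive of the recursion
  let mot : ℕ → Type := fun q =>
    Σ' (a : (M.obj (SimplexCategory.mk q)).X (n - (q : ℤ)))
      (b : (M.obj (SimplexCategory.mk (q + 1))).X (n - ((q + 1 : ℕ) : ℤ))),
      (M.obj (SimplexCategory.mk (q + 1))).d (n - ((q + 1 : ℕ) : ℤ))
          (n + 1 - ((q + 1 : ℕ) : ℤ)) b
        = (-1 : ℤ) ^ (q + 1) • (x (q + 1) - tr (M.obj (SimplexCategory.mk (q + 1)))
            (show n - (q : ℤ) = n + 1 - ((q + 1 : ℕ) : ℤ) by push_cast; ring)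
            (Bc M q (n - (q : ℤ)) a))
  -- the base cell : column 1 from column 0
  have base0 : Σ' (z : (M.obj (SimplexCategory.mk (0 + 1))).X (n - ((0 + 1 : ℕ) : ℤ))),
      (M.obj (SimplexCategory.mk (0 + 1))).d (n - ((0 + 1 : ℕ) : ℤ))
          (n + 1 - ((0 + 1 : ℕ) : ℤ)) z
        = (-1 : ℤ) ^ (0 + 1) • (x (0 + 1) - tr (M.obj (SimplexCategory.mk (0 + 1)))
            (show n - ((0 : ℕ) : ℤ) = n + 1 - ((0 + 1 : ℕ) : ℤ) by push_cast; ring)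
            (Bc M 0 (n - ((0 : ℕ) : ℤ)) y0)) := by
    have e1 : (n + 1 : ℤ) - ((0 + 1 : ℕ) : ℤ) = n - ((0 : ℕ) : ℤ) := by push_cast; ring
    have hco : (M.obj (SimplexCategory.mk (0 + 1))).d (n - ((0 : ℕ) : ℤ))
        (n + 1 - ((0 : ℕ) : ℤ))
        (tr _ e1 (x (0 + 1)) - Bc M 0 (n - ((0 : ℕ) : ℤ)) y0) = 0 := by
      rw [map_sub, key 0, Bc_d, hcol0, pow_zero, one_smul, sub_self]
    have hw : (M.obj (SimplexCategory.mk (0 + 1))).d (n - ((0 : ℕ) : ℤ))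
        (n + 1 - ((0 : ℕ) : ℤ))
        ((-1 : ℤ) ^ (0 + 1) • (tr _ e1 (x (0 + 1)) - Bc M 0 (n - ((0 : ℕ) : ℤ)) y0)) = 0 := by
      rw [map_zsmul, hco, smul_zero]
    obtain ⟨z, hz⟩ := build 0
      ((-1 : ℤ) ^ (0 + 1) • (tr _ e1 (x (0 + 1)) - Bc M 0 (n - ((0 : ℕ) : ℤ)) y0)) hw
    refine ⟨z, ?_⟩
    rw [hz, tr_zsmul, tr_sub, tr_tr, tr_self]
  -- the inductive step
  have step0 : ∀ (q : ℕ) (σ : mot q),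
      Σ' (z : (M.obj (SimplexCategory.mk (q + 1 + 1))).X (n - ((q + 1 + 1 : ℕ) : ℤ))),
        (M.obj (SimplexCategory.mk (q + 1 + 1))).d (n - ((q + 1 + 1 : ℕ) : ℤ))
            (n + 1 - ((q + 1 + 1 : ℕ) : ℤ)) z
          = (-1 : ℤ) ^ (q + 1 + 1) • (x (q + 1 + 1)
              - tr (M.obj (SimplexCategory.mk (q + 1 + 1)))
                (show n - ((q + 1 : ℕ) : ℤ) = n + 1 - ((q + 1 + 1 : ℕ) : ℤ) by push_cast; ring)
                (Bc M (q + 1) (n - ((q + 1 : ℕ) : ℤ)) σ.2.1)) := by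
    intro q σ
    obtain ⟨a, bb, hinv⟩ := σ
    have e_a : n - (q : ℤ) = n + 1 - ((q + 1 : ℕ) : ℤ) := by push_cast; ring
    rw [tr_Bc] at hinv
    have hco := step_key M q (n - ((q + 1 : ℕ) : ℤ)) (n + 1 - ((q + 1 : ℕ) : ℤ))
      (tr _ e_a a) bb (x (q + 1))
      (tr _ (show (n + 1 : ℤ) - ((q + 1 + 1 : ℕ) : ℤ) = n - ((q + 1 : ℕ) : ℤ) by
        push_cast; ring) (x (q + 1 + 1))) hinv (key (q + 1))
    have hw : (M.obj (SimplexCategory.mk (q + 1 + 1))).d (n - ((q + 1 : ℕ) : ℤ))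
        (n + 1 - ((q + 1 : ℕ) : ℤ))
        ((-1 : ℤ) ^ (q + 1 + 1) •
          (tr _ (show (n + 1 : ℤ) - ((q + 1 + 1 : ℕ) : ℤ) = n - ((q + 1 : ℕ) : ℤ) by
            push_cast; ring) (x (q + 1 + 1))
            - Bc M (q + 1) (n - ((q + 1 : ℕ) : ℤ)) bb)) = 0 := by
      rw [map_zsmul, hco, smul_zero]
    obtain ⟨z, hz⟩ := build (q + 1) _ hw
    refine ⟨z, ?_⟩
    rw [hz, tr_zsmul, tr_sub, tr_tr, tr_self]
  -- assemble
  let step' : ∀ q, mot q → mot (q + 1) := fun q σ => ⟨σ.2.1, (step0 q σ).1, (step0 q σ).2⟩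
  let base : mot 0 := ⟨y0, base0.1, base0.2⟩
  let g : ∀ q, mot q := fun q => Nat.rec base step' q
  refine ⟨fun p => (g p).1, funext fun p => ?_⟩
  cases p with
  | zero =>
    refine (totD_zero M n _).trans ?_
    exact hcol0
  | succ q =>
    refine (totD_succ M n _ q).trans ?_
    have hy1 : (g (q + 1)).1 = (g q).2.1 := rfl
    rw [hy1, (g q).2.2]
    have hsq : ((-1 : ℤ) ^ (q + 1)) * ((-1 : ℤ) ^ (q + 1)) = 1 := by
      rw [← pow_add]; exact Even.neg_one_pow ⟨q + 1, rfl⟩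
    rw [smul_smul, hsq, one_smul]
    exact sub_add_cancel _ _
end

section
/- Let A be a (ℤ×ℤ)-graded ring of Tate type (so A(k) = 0 for k > 0 and A(0) = ℤ concentrated in cohomological degree 0). For each integer i ≥ 1 let A_i ⊆ A be the graded additive subgroup whose homogeneous pieces are A_i(k)^n = A(k)^n if k = 0, or if k < 0 and n ≥ ik, and A_i(k)^n = 0 otherwise. Then: each A_i is a subring of A containing the unit; A_i ⊆ A_{i+1} for every i ≥ 1; the union ⋃_{i ≥ 1} A_i equals A; and each A_i is of bounded Tate type, i.e. for every k < 0 the graded piece A_i(k) vanishes in all cohomological degrees n < ik. -/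
/-!
STATEMENT 8.  Let `A` be a `(ℤ × ℤ)`-graded ring of Tate type (pieces `𝒜 (k, i)`, `k` the
Adams degree and `i` the cohomological degree; `𝒜 (k, i) = 0` for `k > 0`, and `𝒜 (0, ·)`
is `ℤ` concentrated in degree `0`, i.e. `𝒜 (0, 0) = ℤ·1` with `n ↦ n • 1` injective and
`𝒜 (0, i) = 0` for `i ≠ 0`).  For `i ≥ 1` let `A_i ⊆ A` be the graded additive subgroup
with pieces `A_i(k)^n = A(k)^n` if `k = 0`, or if `k < 0` and `n ≥ i·k`, and `0` otherwise.
Then each `A_i` is a subring containing the unit, `A_i ⊆ A_{i+1}`, `⋃_{i ≥ 1} A_i = A`, and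
each `A_i` is of bounded Tate type: `A_i(k)^n = 0` for `k < 0` and `n < i·k`.
-/

open DirectSum

variable {R : Type} [Ring R]

/-- The homogeneous pieces of the subring `A_i`: `A_i(k)^n = A(k)^n` if `k = 0`, or if
`k < 0` and `n ≥ i·k`; and `A_i(k)^n = 0` otherwise. -/
def tatePiece (𝒜 : ℤ × ℤ → AddSubgroup R) (i : ℕ) (k n : ℤ) : AddSubgroup R :=
  if k = 0 ∨ (k < 0 ∧ (i : ℤ) * k ≤ n) then 𝒜 (k, n) else ⊥

/-- The graded additive subgroup `A_i ⊆ A` whose homogeneous pieces are `tatePiece 𝒜 i`: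
an element belongs to `A_i` iff each of its homogeneous components does. -/
def tateSub (𝒜 : ℤ × ℤ → AddSubgroup R) [GradedRing 𝒜] (i : ℕ) : AddSubgroup R where
  carrier := {r : R | ∀ k n : ℤ, ((DirectSum.decompose 𝒜 r) (k, n) : R) ∈ tatePiece 𝒜 i k n}
  add_mem' := by
    intro a b ha hb k n
    rw [decompose_add, DFinsupp.add_apply]
    push_cast
    exact add_mem (ha k n) (hb k n)
  zero_mem' := by
    intro k n
    rw [decompose_zero]
    simpa using zero_mem _
  neg_mem' := by
    intro a ha k n
    rw [decompose_neg, DFinsupp.neg_apply]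
    push_cast
    exact neg_mem (ha k n)

lemma tatePiece_le (𝒜 : ℤ × ℤ → AddSubgroup R) (i : ℕ) (k n : ℤ) :
    tatePiece 𝒜 i k n ≤ 𝒜 (k, n) := by
  unfold tatePiece; split_ifs with h
  · exact le_rfl
  · exact bot_le

lemma mem_tateSub_of_mem_piece (𝒜 : ℤ × ℤ → AddSubgroup R) [GradedRing 𝒜] (i : ℕ)
    {k n : ℤ} {a : R} (ha : a ∈ tatePiece 𝒜 i k n) : a ∈ tateSub 𝒜 i := by
  intro k' n'
  by_cases h : k = 0 ∨ (k < 0 ∧ (i : ℤ) * k ≤ n)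
  · have ha' : a ∈ 𝒜 (k, n) := tatePiece_le 𝒜 i k n ha
    by_cases he : ((k, n) : ℤ × ℤ) = (k', n')
    · obtain ⟨rfl, rfl⟩ := Prod.mk.injEq .. ▸ he
      rw [DirectSum.decompose_of_mem_same 𝒜 ha']
      exact ha
    · rw [DirectSum.decompose_of_mem_ne 𝒜 ha' he]
      exact zero_mem _
  · rw [tatePiece, if_neg h, AddSubgroup.mem_bot] at ha
    subst ha
    rw [decompose_zero]
    simpa using zero_mem _

lemma piece_mul (𝒜 : ℤ × ℤ → AddSubgroup R) [GradedRing 𝒜]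
    (hTate₂ : ∀ i : ℤ, i ≠ 0 → 𝒜 (0, i) = ⊥) (i : ℕ)
    {k₁ n₁ k₂ n₂ : ℤ} {a b : R}
    (ha : a ∈ tatePiece 𝒜 i k₁ n₁) (hb : b ∈ tatePiece 𝒜 i k₂ n₂) :
    a * b ∈ tatePiece 𝒜 i (k₁ + k₂) (n₁ + n₂) := by
  unfold tatePiece at ha hb
  split_ifs at ha with h₁
  · split_ifs at hb with h₂
    · by_cases hz₁ : k₁ = 0 ∧ n₁ ≠ 0
      · have : a = 0 := by
          rw [hz₁.1, hTate₂ n₁ hz₁.2, AddSubgroup.mem_bot] at ha; exact ha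
        rw [this, zero_mul]; exact zero_mem _
      · by_cases hz₂ : k₂ = 0 ∧ n₂ ≠ 0
        · have : b = 0 := by
            rw [hz₂.1, hTate₂ n₂ hz₂.2, AddSubgroup.mem_bot] at hb; exact hb
          rw [this, mul_zero]; exact zero_mem _
        · have hc : k₁ + k₂ = 0 ∨ (k₁ + k₂ < 0 ∧ (i : ℤ) * (k₁ + k₂) ≤ n₁ + n₂) := by
            rcases h₁ with h₁ | ⟨hk₁, hn₁⟩
            · have hn₁0 : n₁ = 0 := by
                by_contra hcon; exact hz₁ ⟨h₁, hcon⟩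
              rcases h₂ with h₂ | ⟨hk₂, hn₂⟩
              · left; omega
              · right
                refine ⟨by omega, ?_⟩
                have : (i : ℤ) * (k₁ + k₂) = (i : ℤ) * k₂ := by rw [h₁]; ring
                omega
            · rcases h₂ with h₂ | ⟨hk₂, hn₂⟩
              · have hn₂0 : n₂ = 0 := by
                  by_contra hcon; exact hz₂ ⟨h₂, hcon⟩
                right
                refine ⟨by omega, ?_⟩
                have : (i : ℤ) * (k₁ + k₂) = (i : ℤ) * k₁ := by rw [h₂]; ring
                omega
              · right
                refine ⟨by omega, ?_⟩
                have : (i : ℤ) * (k₁ + k₂) = (i : ℤ) * k₁ + (i : ℤ) * k₂ := by ring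
                omega
          rw [tatePiece, if_pos hc]
          exact SetLike.mul_mem_graded ha hb
    · rw [AddSubgroup.mem_bot] at hb
      rw [hb, mul_zero]; exact zero_mem _
  · rw [AddSubgroup.mem_bot] at ha
    rw [ha, zero_mul]; exact zero_mem _

lemma tateSub_mul_mem (𝒜 : ℤ × ℤ → AddSubgroup R) [GradedRing 𝒜]
    (hTate₂ : ∀ i : ℤ, i ≠ 0 → 𝒜 (0, i) = ⊥) (i : ℕ)
    {x y : R} (hx : x ∈ tateSub 𝒜 i) (hy : y ∈ tateSub 𝒜 i) : x * y ∈ tateSub 𝒜 i := by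
  classical
  have hx' := DirectSum.sum_support_decompose 𝒜 x
  have hy' := DirectSum.sum_support_decompose 𝒜 y
  rw [← hx', ← hy', Finset.sum_mul_sum]
  apply AddSubgroup.sum_mem
  intro j hj
  apply AddSubgroup.sum_mem
  intro j' hj'
  have h1 : ((decompose 𝒜 x j : R)) ∈ tatePiece 𝒜 i j.1 j.2 := by
    have := hx j.1 j.2
    simpa using this
  have h2 : ((decompose 𝒜 y j' : R)) ∈ tatePiece 𝒜 i j'.1 j'.2 := by
    have := hy j'.1 j'.2
    simpa using this
  exact mem_tateSub_of_mem_piece 𝒜 i (piece_mul 𝒜 hTate₂ i h1 h2)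

/-- If `A` (with grading `𝒜`) is a `(ℤ × ℤ)`-graded ring of Tate type,
then for every `i ≥ 1`: the graded subgroup `A_i` is a subring of `A` containing the unit;
`A_i ⊆ A_{i+1}`; the union `⋃_{i ≥ 1} A_i` is all of `A`; and each `A_i` is of bounded Tate
type, i.e. for `k < 0` its piece in Adams degree `k` vanishes in cohomological degrees
`n < i·k`. -/
theorem tateSub_subring_increasing_union_bounded (𝒜 : ℤ × ℤ → AddSubgroup R) [GradedRing 𝒜]
    (hTate₁ : ∀ k i : ℤ, 0 < k → 𝒜 (k, i) = ⊥)
    (hTate₂ : ∀ i : ℤ, i ≠ 0 → 𝒜 (0, i) = ⊥)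
    (hTate₃ : 𝒜 (0, 0) = AddSubgroup.zmultiples (1 : R))
    (hTate₄ : Function.Injective fun n : ℤ => n • (1 : R)) :
    (∀ i : ℕ, 1 ≤ i →
        (1 : R) ∈ tateSub 𝒜 i ∧
          ∀ x y : R, x ∈ tateSub 𝒜 i → y ∈ tateSub 𝒜 i → x * y ∈ tateSub 𝒜 i) ∧
      (∀ i : ℕ, 1 ≤ i → tateSub 𝒜 i ≤ tateSub 𝒜 (i + 1)) ∧
      (∀ r : R, ∃ i : ℕ, 1 ≤ i ∧ r ∈ tateSub 𝒜 i) ∧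
      (∀ i : ℕ, 1 ≤ i → ∀ k n : ℤ, k < 0 → n < (i : ℤ) * k → tatePiece 𝒜 i k n = ⊥) := by
  classical
  refine ⟨?_, ?_, ?_, ?_⟩
  · intro i _
    constructor
    · apply mem_tateSub_of_mem_piece 𝒜 i (k := 0) (n := 0)
      rw [tatePiece, if_pos (Or.inl rfl)]
      exact SetLike.one_mem_graded 𝒜
    · intro x y hx hy
      exact tateSub_mul_mem 𝒜 hTate₂ i hx hy
  · intro i _ x hx k n
    have hxkn := hx k n
    rw [tatePiece] at hxkn ⊢
    split_ifs at hxkn with h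
    · rw [if_pos]
      · exact hxkn
      · rcases h with h | ⟨hk, hn⟩
        · exact Or.inl h
        · refine Or.inr ⟨hk, ?_⟩
          have : ((i + 1 : ℕ) : ℤ) * k = (i : ℤ) * k + k := by push_cast; ring
          omega
    · rw [AddSubgroup.mem_bot] at hxkn
      rw [hxkn]
      exact zero_mem _
  · intro r
    set D := DirectSum.decompose 𝒜 r with hD
    refine ⟨1 + D.support.sup (fun j => (-j.2).toNat), Nat.le_add_right 1 _, ?_⟩
    intro k n
    set i : ℕ := 1 + D.support.sup (fun j => (-j.2).toNat) with hi
    by_cases hsupp : ((k, n) : ℤ × ℤ) ∈ D.support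
    · rcases lt_trichotomy k 0 with hk | hk | hk
      · rw [tatePiece, if_pos]
        · exact (D (k, n)).2
        · refine Or.inr ⟨hk, ?_⟩
          have h1 : (-n).toNat ≤ D.support.sup (fun j => (-j.2).toNat) :=
            Finset.le_sup (f := fun j : ℤ × ℤ => (-j.2).toNat) hsupp
          have h2 : -n ≤ ((-n).toNat : ℤ) := Int.self_le_toNat _
          have h3 : -(i : ℤ) ≤ n := by
            have : ((-n).toNat : ℤ) ≤ (i : ℤ) := by exact_mod_cast Nat.le_of_lt (by omega)
            omega
          have h4 : (i : ℤ) * k ≤ (i : ℤ) * (-1) :=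
            mul_le_mul_of_nonneg_left (by omega) (by positivity)
          have h5 : (i : ℤ) * (-1) = -(i : ℤ) := by ring
          omega
      · subst hk
        rw [tatePiece, if_pos (Or.inl rfl)]
        exact (D (0, n)).2
      · rw [tatePiece, if_neg (by omega)]
        have hmem : ((D (k, n) : R)) ∈ (⊥ : AddSubgroup R) := by
          rw [← hTate₁ k n hk]; exact (D (k, n)).2
        rw [AddSubgroup.mem_bot] at hmem
        rw [hmem]
        exact zero_mem _
    · have hz : D (k, n) = 0 := DFinsupp.notMem_support_iff.mp hsupp
      rw [hz]
      simpa using zero_mem _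
  · intro i _ k n hk hn
    rw [tatePiece, if_neg (by omega)]
end
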